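/- Let G be a finite simple graph and let e = uv be an edge of G that is not contained in any triangle of G (i.e., u and v have no common neighbor in G). Then σ(Ḡ, x) = σ(complement of (G − e), x) + x · σ(complement of G[V ∖ {u,v}], x), where G − e is G with the edge e deleted, G[V ∖ {u,v}] is the subgraph of G induced on the vertices other than u and v, and Ḡ denotes the complement of G. -/

import Mathlib

open Polynomial

/-- `numIndepPartitions G i` is the number of partitions of the vertex set of `G` into
exactly `i` nonempty independent sets, encoded as the number of setoids (equivalence
relations) on `V` with exactly `i` equivalence classes, each class being an independent
set of `G`. -/
noncomputable def numIndepPartitions {V : Type*} (G : SimpleGraph V) (i : ℕ) : ℕ :=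
  Nat.card {P : Setoid V // Nat.card (Quotient P) = i ∧
    ∀ c ∈ P.classes, c.Pairwise fun u v => ¬ G.Adj u v}

/-- The σ-polynomial of a finite simple graph `G`: `σ(G,x) = ∑ aᵢ xⁱ` where `aᵢ` is the
number of partitions of the vertex set of `G` into `i` nonempty independent sets. -/
noncomputable def sigmaPoly {V : Type*} [Finite V] (G : SimpleGraph V) : Polynomial ℝ :=
  ∑ i ∈ Finset.range (Nat.card V + 1), (numIndepPartitions G i : ℝ) • X ^ i

namespace SigmaAux

variable {V : Type*}

lemma classes_iff (P : Setoid V) (H : SimpleGraph V) :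
    (∀ c ∈ P.classes, c.Pairwise fun a b => ¬ H.Adj a b) ↔
      ∀ a b, P a b → ¬ H.Adj a b := by
  constructor
  · intro h a b hab
    have hc : {x | P x b} ∈ P.classes := ⟨b, rfl⟩
    rcases eq_or_ne a b with rfl | hne
    · exact H.irrefl
    · exact h _ hc hab (P.refl b) hne
  · rintro h c ⟨y, rfl⟩ a ha b hb _
    exact h a b (P.trans ha (P.symm hb))

lemma nip_eq (H : SimpleGraph V) (i : ℕ) :
    numIndepPartitions H i =
      Nat.card {P : Setoid V // Nat.card (Quotient P) = i ∧
        ∀ a b, P a b → ¬ H.Adj a b} := by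
  unfold numIndepPartitions
  exact Nat.card_congr (Equiv.subtypeEquivRight fun P =>
    and_congr_right fun _ => classes_iff P H)

lemma nip_zero [Finite V] [Nonempty V] (H : SimpleGraph V) :
    numIndepPartitions H 0 = 0 := by
  rw [nip_eq]
  have : IsEmpty {P : Setoid V // Nat.card (Quotient P) = 0 ∧
      ∀ a b, P a b → ¬ H.Adj a b} := by
    refine ⟨fun ⟨P, h, _⟩ => ?_⟩
    have hne : Nonempty (Quotient P) := ⟨Quotient.mk P (Classical.arbitrary V)⟩
    have := Nat.card_pos (α := Quotient P)
    omega
  exact Nat.card_of_isEmpty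

lemma nip_gt [Finite V] (H : SimpleGraph V) (i : ℕ) (hi : Nat.card V < i) :
    numIndepPartitions H i = 0 := by
  rw [nip_eq]
  have : IsEmpty {P : Setoid V // Nat.card (Quotient P) = i ∧
      ∀ a b, P a b → ¬ H.Adj a b} := by
    refine ⟨fun ⟨P, h, _⟩ => ?_⟩
    have hle : Nat.card (Quotient P) ≤ Nat.card V :=
      Nat.card_le_card_of_surjective (Quotient.mk P) Quotient.mk_surjective
    omega
  exact Nat.card_of_isEmpty

def SS (u v : V) : Set V := {w : V | w ≠ u ∧ w ≠ v}

lemma not_mem_SS {u v a : V} : a ∉ SS u v ↔ a = u ∨ a = v := by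
  simp only [SS, Set.mem_setOf_eq, not_and_or, not_not, ne_eq]

def toFull (u v : V) (Q : Setoid ↥(SS u v)) : Setoid V where
  r a b := ((a = u ∨ a = v) ∧ (b = u ∨ b = v)) ∨
    ∃ (ha : a ∈ SS u v) (hb : b ∈ SS u v), Q ⟨a, ha⟩ ⟨b, hb⟩
  iseqv := by
    constructor
    · intro a
      by_cases h : a ∈ SS u v
      · exact Or.inr ⟨h, h, Q.refl _⟩
      · exact Or.inl ⟨not_mem_SS.mp h, not_mem_SS.mp h⟩
    · rintro a b (⟨ha, hb⟩ | ⟨ha, hb, h⟩)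
      · exact Or.inl ⟨hb, ha⟩
      · exact Or.inr ⟨hb, ha, Q.symm h⟩
    · rintro a b c (⟨ha, hb⟩ | ⟨ha, hb, h⟩) (⟨hb', hc⟩ | ⟨hb', hc, h'⟩)
      · exact Or.inl ⟨ha, hc⟩
      · exfalso
        rcases hb with h1 | h1
        exacts [hb'.1 h1, hb'.2 h1]
      · exfalso
        rcases hb' with h1 | h1
        exacts [hb.1 h1, hb.2 h1]
      · exact Or.inr ⟨ha, hc, Q.trans h h'⟩

lemma toFull_rel_iff {u v : V} (Q : Setoid ↥(SS u v)) (a b : V) :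
    (toFull u v Q) a b ↔ (((a = u ∨ a = v) ∧ (b = u ∨ b = v)) ∨
      ∃ (ha : a ∈ SS u v) (hb : b ∈ SS u v), Q ⟨a, ha⟩ ⟨b, hb⟩) := Iff.rfl

open Classical in
noncomputable def quotEquiv (u v : V) (Q : Setoid ↥(SS u v)) :
    Quotient (toFull u v Q) ≃ Option (Quotient Q) where
  toFun := Quotient.lift
    (fun a => if h : a ∈ SS u v then some (Quotient.mk Q ⟨a, h⟩) else none)
    (by
      rintro a b (⟨ha, hb⟩ | ⟨ha, hb, hq⟩)
      · simp only [dif_neg (not_mem_SS.mpr ha), dif_neg (not_mem_SS.mpr hb)]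
      · simp only [dif_pos ha, dif_pos hb]
        exact congrArg some (Quotient.sound hq))
  invFun := fun o => o.elim (Quotient.mk (toFull u v Q) u)
    (Quotient.lift (fun s => Quotient.mk (toFull u v Q) s.val)
      (fun a b h => Quotient.sound (Or.inr ⟨a.2, b.2, by
        convert h <;> exact Subtype.ext rfl⟩)))
  left_inv := by
    refine Quotient.ind fun a => ?_
    by_cases h : a ∈ SS u v
    · show Option.elim (if h : a ∈ SS u v then some (Quotient.mk Q ⟨a, h⟩) else none) _ _ = _
      rw [dif_pos h]
      rfl
    · show Option.elim (if h : a ∈ SS u v then some (Quotient.mk Q ⟨a, h⟩) else none) _ _ = _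
      rw [dif_neg h]
      exact Quotient.sound (Or.inl ⟨Or.inl rfl, not_mem_SS.mp h⟩)
  right_inv := by
    rintro (_ | q)
    · show (if h : u ∈ SS u v then some (Quotient.mk Q ⟨u, h⟩) else none) = none
      rw [dif_neg (not_mem_SS.mpr (Or.inl rfl))]
    · obtain ⟨s, rfl⟩ := Quotient.exists_rep q
      show (if h : s.val ∈ SS u v then some (Quotient.mk Q ⟨s.val, h⟩) else none)
        = some (Quotient.mk Q s)
      rw [dif_pos s.2]

lemma card_toFull [Finite V] (u v : V) (Q : Setoid ↥(SS u v)) :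
    Nat.card (Quotient (toFull u v Q)) = Nat.card (Quotient Q) + 1 := by
  rw [Nat.card_congr (quotEquiv u v Q), Finite.card_option]

lemma comap_toFull (u v : V) (Q : Setoid ↥(SS u v)) :
    Setoid.comap Subtype.val (toFull u v Q) = Q := by
  refine Setoid.ext fun a b => ?_
  rw [Setoid.comap_rel]
  constructor
  · rintro (⟨ha, _⟩ | ⟨ha, hb, hq⟩)
    · rcases ha with h | h
      exacts [absurd h a.2.1, absurd h a.2.2]
    · convert hq <;> exact Subtype.ext rfl
  · intro h
    exact Or.inr ⟨a.2, b.2, by convert h <;> exact Subtype.ext rfl⟩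

lemma toFull_comap (u v : V) (P : Setoid V) (hrel : P u v)
    (hcl : ∀ w, P u w → w = u ∨ w = v) :
    toFull u v (Setoid.comap Subtype.val P) = P := by
  refine Setoid.ext fun a b => ?_
  constructor
  · rintro (⟨ha, hb⟩ | ⟨ha, hb, hq⟩)
    · have h1 : ∀ x, x = u ∨ x = v → P u x := by
        intro x hx
        rcases hx with h | h
        · rw [h]
        · rw [h]; exact hrel
      exact P.trans (P.symm (h1 a ha)) (h1 b hb)
    · exact hq
  · intro h
    by_cases ha : a ∈ SS u v
    · by_cases hb : b ∈ SS u v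
      · exact Or.inr ⟨ha, hb, h⟩
      · exfalso
        have hb' := not_mem_SS.mp hb
        have hua : P u a := by
          rcases hb' with h' | h'
          · rw [← h']; exact P.symm h
          · exact P.trans hrel (h' ▸ P.symm h)
        rcases hcl a hua with h' | h'
        · exact ha.1 h'
        · exact ha.2 h'
    · by_cases hb : b ∈ SS u v
      · exfalso
        have ha' := not_mem_SS.mp ha
        have hub : P u b := by
          rcases ha' with h' | h'
          · rw [← h']; exact h
          · exact P.trans hrel (h' ▸ h)
        rcases hcl b hub with h' | h'
        · exact hb.1 h'
        · exact hb.2 h'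
      · exact Or.inl ⟨not_mem_SS.mp ha, not_mem_SS.mp hb⟩


section Main

variable [Finite V] (G : SimpleGraph V) (u v : V)

instance : Finite (Setoid V) :=
  Finite.of_injective (fun s : Setoid V => s.r)
    fun s t h => Setoid.ext fun a b => iff_of_eq (congrFun (congrFun h a) b)

/-- Part C equivalence. -/
noncomputable def equivC (huv : G.Adj u v)
    (htriangle : ∀ w : V, ¬(G.Adj u w ∧ G.Adj v w)) (i : ℕ) :
    {P : Setoid V // Nat.card (Quotient P) = i + 1 ∧
        (∀ a b, P a b → a = b ∨ G.Adj a b) ∧ P u v} ≃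
      {Q : Setoid ↥(SS u v) // Nat.card (Quotient Q) = i ∧
        ∀ a b : ↥(SS u v), Q a b → a = b ∨ G.Adj a.1 b.1} where
  toFun := fun ⟨P, hc, hcl, hr⟩ => by
    refine ⟨Setoid.comap Subtype.val P, ?_, ?_⟩
    · have hclass : ∀ w, P u w → w = u ∨ w = v := by
        intro w hw
        by_contra hcon
        push_neg at hcon
        have h1 : G.Adj u w := by
          rcases hcl u w hw with h | h
          · exact absurd h.symm hcon.1
          · exact h
        have h2 : G.Adj v w := by
          have : P v w := P.trans (P.symm hr) hw
          rcases hcl v w this with h | h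
          · exact absurd h.symm hcon.2
          · exact h
        exact htriangle w ⟨h1, h2⟩
      have := card_toFull u v (Setoid.comap Subtype.val P)
      rw [toFull_comap u v P hr hclass] at this
      omega
    · intro a b hab
      have hab' : P a.1 b.1 := hab
      rcases hcl a.1 b.1 hab' with h | h
      · exact Or.inl (Subtype.ext h)
      · exact Or.inr h
  invFun := fun ⟨Q, hc, hcl⟩ => by
    refine ⟨toFull u v Q, ?_, ?_, ?_⟩
    · rw [card_toFull, hc]
    · rintro a b (⟨ha, hb⟩ | ⟨ha, hb, hq⟩)
      · rcases ha with rfl | rfl <;> rcases hb with rfl | rfl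
        · exact Or.inl rfl
        · exact Or.inr huv
        · exact Or.inr huv.symm
        · exact Or.inl rfl
      · rcases hcl ⟨a, ha⟩ ⟨b, hb⟩ hq with h | h
        · exact Or.inl (congrArg Subtype.val h)
        · exact Or.inr h
    · exact Or.inl ⟨Or.inl rfl, Or.inr rfl⟩
  left_inv := by
    rintro ⟨P, hc, hcl, hr⟩
    refine Subtype.ext ?_
    show toFull u v (Setoid.comap Subtype.val P) = P
    refine toFull_comap u v P hr ?_
    intro w hw
    by_contra hcon
    push_neg at hcon
    have h1 : G.Adj u w := by
      rcases hcl u w hw with h | h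
      · exact absurd h.symm hcon.1
      · exact h
    have h2 : G.Adj v w := by
      have : P v w := P.trans (P.symm hr) hw
      rcases hcl v w this with h | h
      · exact absurd h.symm hcon.2
      · exact h
    exact htriangle w ⟨h1, h2⟩
  right_inv := by
    rintro ⟨Q, hc, hcl⟩
    exact Subtype.ext (comap_toFull u v Q)

lemma B_iff (huv : G.Adj u v) (P : Setoid V) :
    ((∀ a b, P a b → a = b ∨ G.Adj a b) ∧ ¬ P u v) ↔
      ∀ a b, P a b → a = b ∨ (G.Adj a b ∧ s(a, b) ≠ s(u, v)) := by
  constructor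
  · rintro ⟨hcl, hnr⟩ a b hab
    rcases hcl a b hab with h | hadj
    · exact Or.inl h
    · refine Or.inr ⟨hadj, fun hs => hnr ?_⟩
      rcases Sym2.eq_iff.mp hs with ⟨h1, h2⟩ | ⟨h1, h2⟩
      · rw [← h1, ← h2]; exact hab
      · rw [← h1, ← h2]; exact P.symm hab
  · intro h
    refine ⟨fun a b hab => (h a b hab).imp id And.left, fun hr => ?_⟩
    rcases h u v hr with h' | ⟨_, hs⟩
    · exact huv.ne h'
    · exact hs rfl

lemma split_card (p : Setoid V → Prop) :
    Nat.card {P : Setoid V // p P} =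
      Nat.card {P : Setoid V // p P ∧ P u v} +
        Nat.card {P : Setoid V // p P ∧ ¬ P u v} := by
  classical
  rw [← Nat.card_sum]
  refine Nat.card_congr ?_
  exact ((Equiv.sumCompl fun x : {P : Setoid V // p P} => x.1 u v).symm.trans
    (Equiv.sumCongr (Equiv.subtypeSubtypeEquivSubtypeInter p fun P => P u v)
      (Equiv.subtypeSubtypeEquivSubtypeInter p fun P => ¬ P u v)))

lemma key (huv : G.Adj u v)
    (htriangle : ∀ w : V, ¬(G.Adj u w ∧ G.Adj v w)) (i : ℕ) :
    numIndepPartitions Gᶜ (i + 1) =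
      numIndepPartitions ((G.deleteEdges {s(u, v)})ᶜ) (i + 1) +
        numIndepPartitions ((G.induce (SS u v))ᶜ) i := by
  have hAiff : ∀ P : Setoid V,
      (Nat.card (Quotient P) = i + 1 ∧ ∀ a b, P a b → ¬ Gᶜ.Adj a b) ↔
      (Nat.card (Quotient P) = i + 1 ∧ ∀ a b, P a b → a = b ∨ G.Adj a b) := by
    intro P
    refine and_congr_right fun _ => forall₂_congr fun a b => imp_congr_right fun _ => ?_
    rw [SimpleGraph.compl_adj]
    constructor
    · intro h2
      push_neg at h2
      by_cases hone : a = b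
      · exact Or.inl hone
      · exact Or.inr (h2 hone)
    · intro h'
      rcases h' with h' | h'
      · simp [h']
      · simp [h']
  have hBiff : ∀ P : Setoid V,
      (Nat.card (Quotient P) = i + 1 ∧
        ∀ a b, P a b → ¬ ((G.deleteEdges {s(u, v)})ᶜ).Adj a b) ↔
      (Nat.card (Quotient P) = i + 1 ∧
        ∀ a b, P a b → a = b ∨ (G.Adj a b ∧ s(a, b) ≠ s(u, v))) := by
    intro P
    refine and_congr_right fun _ => forall₂_congr fun a b => imp_congr_right fun _ => ?_
    rw [SimpleGraph.compl_adj]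
    constructor
    · intro h2
      push_neg at h2
      by_cases hone : a = b
      · exact Or.inl hone
      · have h3 := h2 hone
        rw [SimpleGraph.deleteEdges_adj] at h3
        exact Or.inr ⟨h3.1, by simpa using h3.2⟩
    · intro h'
      rw [SimpleGraph.deleteEdges_adj]
      rcases h' with h' | ⟨h1, h2⟩
      · simp [h']
      · simp [h1, h2]
  have hCiff : ∀ Q : Setoid ↥(SS u v),
      (Nat.card (Quotient Q) = i ∧
        ∀ a b, Q a b → ¬ ((G.induce (SS u v))ᶜ).Adj a b) ↔
      (Nat.card (Quotient Q) = i ∧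
        ∀ a b : ↥(SS u v), Q a b → a = b ∨ G.Adj a.1 b.1) := by
    intro Q
    refine and_congr_right fun _ => forall₂_congr fun a b => imp_congr_right fun _ => ?_
    rw [SimpleGraph.compl_adj]
    constructor
    · intro h2
      push_neg at h2
      by_cases hone : a = b
      · exact Or.inl hone
      · exact Or.inr (h2 hone)
    · intro h'
      rcases h' with h' | h'
      · simp [h']
      · intro hcon
        exact absurd h' (hcon.2 ∘ id)
  rw [nip_eq, nip_eq, nip_eq,
    Nat.card_congr (Equiv.subtypeEquivRight hAiff),
    Nat.card_congr (Equiv.subtypeEquivRight hBiff),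
    Nat.card_congr (Equiv.subtypeEquivRight hCiff),
    split_card u v
      (fun P => Nat.card (Quotient P) = i + 1 ∧ ∀ a b, P a b → a = b ∨ G.Adj a b)]
  have e1 : Nat.card {P : Setoid V //
      (Nat.card (Quotient P) = i + 1 ∧ ∀ a b, P a b → a = b ∨ G.Adj a b) ∧ P u v} =
      Nat.card {Q : Setoid ↥(SS u v) // Nat.card (Quotient Q) = i ∧
        ∀ a b : ↥(SS u v), Q a b → a = b ∨ G.Adj a.1 b.1} :=
    Nat.card_congr ((Equiv.subtypeEquivRight fun P => and_assoc).trans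
      (equivC G u v huv htriangle i))
  have e2 : Nat.card {P : Setoid V //
      (Nat.card (Quotient P) = i + 1 ∧ ∀ a b, P a b → a = b ∨ G.Adj a b) ∧ ¬ P u v} =
      Nat.card {P : Setoid V // Nat.card (Quotient P) = i + 1 ∧
        ∀ a b, P a b → a = b ∨ (G.Adj a b ∧ s(a, b) ≠ s(u, v))} :=
    Nat.card_congr (Equiv.subtypeEquivRight fun P => by
      rw [and_assoc]
      exact and_congr_right fun _ => B_iff G u v huv P)
  rw [e1, e2]
  omega

lemma card_SS [Finite V] {u v : V} (h : u ≠ v) :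
    Nat.card ↥(SS u v) + 2 = Nat.card V := by
  have hset : SS u v = ({u, v} : Set V)ᶜ := by
    ext w
    simp [SS, not_or]
  have h2 := Set.ncard_add_ncard_compl ({u, v} : Set V)
  rw [Set.ncard_pair h] at h2
  rw [hset, Nat.card_coe_set_eq]
  omega


end Main

end SigmaAux

theorem sigmaPoly_compl_recursion {V : Type*} [Finite V] (G : SimpleGraph V) (u v : V)
    (huv : G.Adj u v) (htriangle : ∀ w : V, ¬(G.Adj u w ∧ G.Adj v w)) :
    sigmaPoly Gᶜ =
      sigmaPoly ((G.deleteEdges {s(u, v)})ᶜ) +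
        X * sigmaPoly ((G.induce {w : V | w ≠ u ∧ w ≠ v})ᶜ) := by
  classical
  have hne : u ≠ v := huv.ne
  have hnem : Nonempty V := ⟨u⟩
  rw [show {w : V | w ≠ u ∧ w ≠ v} = SigmaAux.SS u v from rfl]
  unfold sigmaPoly
  set m := Nat.card ↥(SigmaAux.SS u v) with hm
  have hmn : m + 2 = Nat.card V := SigmaAux.card_SS hne
  have hA0 : numIndepPartitions Gᶜ 0 = 0 := SigmaAux.nip_zero _
  have hB0 : numIndepPartitions ((G.deleteEdges {s(u, v)})ᶜ) 0 = 0 := SigmaAux.nip_zero _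
  have hC : numIndepPartitions ((G.induce (SigmaAux.SS u v))ᶜ) (m + 1) = 0 :=
    SigmaAux.nip_gt _ _ (by omega)
  have hkey : ∀ i : ℕ, (numIndepPartitions Gᶜ (i + 1) : ℝ) =
      (numIndepPartitions ((G.deleteEdges {s(u, v)})ᶜ) (i + 1) : ℝ) +
        (numIndepPartitions ((G.induce (SigmaAux.SS u v))ᶜ) i : ℝ) := by
    intro i
    rw [SigmaAux.key G u v huv htriangle i]
    push_cast
    ring
  rw [← hmn]
  rw [Finset.sum_range_succ' (fun i => (numIndepPartitions Gᶜ i : ℝ) • X ^ i) (m + 2),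
    Finset.sum_range_succ'
      (fun i => (numIndepPartitions ((G.deleteEdges {s(u, v)})ᶜ) i : ℝ) • X ^ i) (m + 2)]
  simp only [hA0, hB0, Nat.cast_zero, zero_smul, add_zero]
  rw [Finset.mul_sum]
  have hr2 : ∀ i ∈ Finset.range (m + 1),
      X * ((numIndepPartitions ((G.induce (SigmaAux.SS u v))ᶜ) i : ℝ) • (X : Polynomial ℝ) ^ i) =
        (numIndepPartitions ((G.induce (SigmaAux.SS u v))ᶜ) i : ℝ) • X ^ (i + 1) := by
    intro i _
    rw [mul_smul_comm, ← pow_succ']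
  rw [Finset.sum_congr rfl hr2]
  have hext : (∑ i ∈ Finset.range (m + 1),
        (numIndepPartitions ((G.induce (SigmaAux.SS u v))ᶜ) i : ℝ) • (X : Polynomial ℝ) ^ (i + 1)) =
      ∑ i ∈ Finset.range (m + 2),
        (numIndepPartitions ((G.induce (SigmaAux.SS u v))ᶜ) i : ℝ) • (X : Polynomial ℝ) ^ (i + 1) := by
    rw [show m + 2 = m + 1 + 1 from rfl]
    conv_rhs => rw [Finset.sum_range_succ]
    rw [hC]
    simp
  rw [hext, ← Finset.sum_add_distrib]
  refine Finset.sum_congr rfl fun i _ => ?_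
  rw [hkey i, add_smul]
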